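/- Let n ≥ 1 and let A be an invertible n×n complex matrix. The ℂ-linear endomorphism Ad_A : X ↦ A⁻¹ X A of the space of n×n complex matrices admits a basis of eigenvectors (i.e., there is a basis (b_i) of M_n(ℂ) and scalars μ_i ∈ ℂ with A⁻¹ b_i A = μ_i · b_i for all i) if and only if A is diagonalizable (i.e., there exist an invertible matrix S and a diagonal matrix D with A = S D S⁻¹). -/

import Mathlib

open Matrix Polynomial Module


variable {n : ℕ}

lemma isUnit_inv' {A : Matrix (Fin n) (Fin n) ℂ} (hA : IsUnit A) : IsUnit A⁻¹ :=
  (Matrix.isUnit_iff_isUnit_det _).mpr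
    (Matrix.isUnit_nonsing_inv_det _ ((Matrix.isUnit_iff_isUnit_det _).mp hA))

/-- Conjugation by an invertible matrix as a linear equivalence. -/
noncomputable def conjEquiv (S : Matrix (Fin n) (Fin n) ℂ) (hS : IsUnit S) :
    Matrix (Fin n) (Fin n) ℂ ≃ₗ[ℂ] Matrix (Fin n) (Fin n) ℂ :=
  LinearEquiv.ofLinear
    ((LinearMap.mulRight ℂ S⁻¹).comp (LinearMap.mulLeft ℂ S))
    ((LinearMap.mulRight ℂ S).comp (LinearMap.mulLeft ℂ S⁻¹))
    (LinearMap.ext fun X => by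
      have hd := (Matrix.isUnit_iff_isUnit_det _).mp hS
      simp only [LinearMap.coe_comp, Function.comp_apply, LinearMap.mulRight_apply,
        LinearMap.mulLeft_apply, LinearMap.id_coe, id_eq, Matrix.mul_assoc,
        Matrix.mul_nonsing_inv _ hd, Matrix.nonsing_inv_mul_cancel_left _ _ hd,
        Matrix.mul_nonsing_inv_cancel_left _ _ hd, Matrix.mul_one])
    (LinearMap.ext fun X => by
      have hd := (Matrix.isUnit_iff_isUnit_det _).mp hS
      simp only [LinearMap.coe_comp, Function.comp_apply, LinearMap.mulRight_apply,
        LinearMap.mulLeft_apply, LinearMap.id_coe, id_eq, Matrix.mul_assoc,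
        Matrix.nonsing_inv_mul _ hd, Matrix.nonsing_inv_mul_cancel_left _ _ hd,
        Matrix.mul_nonsing_inv_cancel_left _ _ hd, Matrix.mul_one])

lemma conjEquiv_apply (S : Matrix (Fin n) (Fin n) ℂ) (hS : IsUnit S) (X) :
    conjEquiv S hS X = S * X * S⁻¹ := rfl

lemma diag_conj_stdBasisMatrix (d e : Fin n → ℂ) (i j : Fin n) :
    Matrix.diagonal d * Matrix.single i j (1 : ℂ) * Matrix.diagonal e
      = (d i * e j) • Matrix.single i j 1 := by
  ext a b
  rw [Matrix.smul_apply, Matrix.mul_diagonal, Matrix.diagonal_mul]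
  by_cases h : i = a ∧ j = b
  · obtain ⟨rfl, rfl⟩ := h
    simp [Matrix.single]
  · simp [Matrix.single, h]

lemma diag_mul_std_mul (d e : Fin n → ℂ) (i j : Fin n) (X : Matrix (Fin n) (Fin n) ℂ) :
    Matrix.diagonal d * (Matrix.single i j (1 : ℂ) * (Matrix.diagonal e * X))
      = (d i * e j) • (Matrix.single i j 1 * X) := by
  rw [← Matrix.mul_assoc, ← Matrix.mul_assoc, diag_conj_stdBasisMatrix, Matrix.smul_mul]

lemma easyDir (A S : Matrix (Fin n) (Fin n) ℂ) (d : Fin n → ℂ) (hA : IsUnit A)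
    (hS : IsUnit S) (hAe : A = S * Matrix.diagonal d * S⁻¹) :
    ∃ (ι : Type) (b : Basis ι ℂ (Matrix (Fin n) (Fin n) ℂ)) (μ : ι → ℂ),
      ∀ i, A⁻¹ * b i * A = μ i • b i := by
  have hdet := (Matrix.isUnit_iff_isUnit_det _).mp hS
  have hdiag : IsUnit (Matrix.diagonal d) := by
    have h : Matrix.diagonal d = S⁻¹ * A * S := by
      rw [hAe]
      simp only [Matrix.mul_assoc, Matrix.nonsing_inv_mul_cancel_left _ _ hdet,
        Matrix.nonsing_inv_mul _ hdet, Matrix.mul_one]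
    rw [h]
    exact ((isUnit_inv' hS).mul hA).mul hS
  have hd : ∀ i, d i ≠ 0 := fun i hi =>
    ((Matrix.isUnit_diagonal.mp hdiag).map (Pi.evalMonoidHom (fun _ => ℂ) i)).ne_zero hi
  have hAinv : A⁻¹ = S * Matrix.diagonal (fun i => (d i)⁻¹) * S⁻¹ := by
    apply Matrix.inv_eq_right_inv
    rw [hAe]
    simp only [Matrix.mul_assoc, Matrix.nonsing_inv_mul_cancel_left _ _ hdet]
    rw [← Matrix.mul_assoc (Matrix.diagonal d), Matrix.diagonal_mul_diagonal]
    have h1 : (fun i => d i * (d i)⁻¹) = fun _ => (1 : ℂ) := by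
      funext i; exact mul_inv_cancel₀ (hd i)
    rw [h1, Matrix.diagonal_one, Matrix.one_mul, Matrix.mul_nonsing_inv _ hdet]
  refine ⟨Fin n × Fin n, (Matrix.stdBasis ℂ (Fin n) (Fin n)).map (conjEquiv S hS),
    fun p => (d p.1)⁻¹ * d p.2, ?_⟩
  rintro ⟨i, j⟩
  rw [Basis.map_apply, Matrix.stdBasis_eq_single, conjEquiv_apply, hAinv]
  nth_rewrite 1 [hAe]
  simp only [Matrix.mul_assoc, Matrix.nonsing_inv_mul_cancel_left _ _ hdet]
  rw [diag_mul_std_mul, Matrix.mul_smul]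


lemma semisimple_of_eigenbasis {K V : Type*} [Field K] [DecidableEq K] [AddCommGroup V] [Module K V]
    [FiniteDimensional K V] {ι : Type*} (b : Basis ι K V) (μ : ι → K)
    (f : Module.End K V) (h : ∀ i, f (b i) = μ i • b i) : f.IsSemisimple := by
  have : Fintype ι := FiniteDimensional.fintypeBasisIndex b
  set T : Finset K := Finset.image μ Finset.univ with hT
  set p : K[X] := ∏ c ∈ T, (X - C c) with hp
  have hsq : Squarefree p := by
    refine (Polynomial.separable_prod_X_sub_C_iff' (f := id) (s := T)).mpr ?_ |>.squarefree
    intro x _ y _ hxy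
    simpa using hxy
  refine Module.End.isSemisimple_of_squarefree_aeval_eq_zero hsq ?_
  refine Basis.ext b fun i => ?_
  have hmem : μ i ∈ T := Finset.mem_image_of_mem μ (Finset.mem_univ i)
  have hfac : p = (∏ c ∈ T.erase (μ i), (X - C c)) * (X - C (μ i)) := by
    rw [mul_comm]; exact (Finset.mul_prod_erase _ _ hmem).symm
  rw [hfac, _root_.map_mul]
  have hker : (aeval f (X - C (μ i))) (b i) = 0 := by
    simp [h i, sub_eq_zero, Module.algebraMap_end_apply]
  rw [Module.End.mul_apply, hker, map_zero, LinearMap.zero_apply]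


lemma eigenbasis_of_semisimple {V : Type} [AddCommGroup V] [Module ℂ V]
    [FiniteDimensional ℂ V] (f : Module.End ℂ V) (hf : f.IsSemisimple) :
    ∃ (ι : Type) (b : Basis ι ℂ V) (μ : ι → ℂ), ∀ i, f (b i) = μ i • b i := by
  have h1 : ∀ μ : ℂ, f.maxGenEigenspace μ = f.eigenspace μ := fun μ =>
    hf.isFinitelySemisimple.maxGenEigenspace_eq_eigenspace μ
  have h2 : ⨆ μ : ℂ, f.eigenspace μ = ⊤ := by
    rw [← funext h1]
    exact Module.End.iSup_maxGenEigenspace_eq_top f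
  have h3 : iSupIndep (f.eigenspace ·) := by
    have := Module.End.independent_maxGenEigenspace f
    simpa only [funext h1] using this
  have internal := DirectSum.isInternal_submodule_of_iSupIndep_of_iSup_eq_top h3 h2
  set v : ∀ μ : ℂ, Basis (Basis.ofVectorSpaceIndex ℂ (f.eigenspace μ)) ℂ (f.eigenspace μ) :=
    fun μ => Basis.ofVectorSpace ℂ _
  refine ⟨(μ : ℂ) × (Basis.ofVectorSpaceIndex ℂ (f.eigenspace μ)),
    internal.collectedBasis v, fun σ => σ.1, fun σ => ?_⟩
  have hmem := internal.collectedBasis_mem v σ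
  exact Module.End.mem_eigenspace_iff.mp hmem


lemma diagonalizable_of_eigenbasis {n : ℕ} (A : Matrix (Fin n) (Fin n) ℂ) {ι : Type}
    (v : Basis ι ℂ (Fin n → ℂ)) (μ : ι → ℂ) (h : ∀ i, A.mulVec (v i) = μ i • v i) :
    ∃ (S : Matrix (Fin n) (Fin n) ℂ) (D : Fin n → ℂ),
      IsUnit S ∧ A = S * Matrix.diagonal D * S⁻¹ := by
  have : Fintype ι := FiniteDimensional.fintypeBasisIndex v
  have hcard : Fintype.card ι = n := by
    rw [← Module.finrank_eq_card_basis v, Module.finrank_fin_fun]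
  let e : ι ≃ Fin n := Fintype.equivFinOfCardEq hcard
  let b' : Basis (Fin n) ℂ (Fin n → ℂ) := v.reindex e
  let μ' : Fin n → ℂ := μ ∘ e.symm
  have h' : ∀ j, A.mulVec (b' j) = μ' j • b' j := by
    intro j
    simp only [b', Basis.reindex_apply, μ', Function.comp_apply]
    exact h (e.symm j)
  set S : Matrix (Fin n) (Fin n) ℂ := (Pi.basisFun ℂ (Fin n)).toMatrix ⇑b' with hSdef
  have : Invertible S := Basis.invertibleToMatrix (Pi.basisFun ℂ (Fin n)) b'
  have hS : IsUnit S := isUnit_of_invertible S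
  have hdet := (Matrix.isUnit_iff_isUnit_det _).mp hS
  have hSe : ∀ i j, S i j = b' j i := by
    intro i j
    rw [hSdef, Basis.toMatrix_apply, Pi.basisFun_repr]
  have key : A * S = S * Matrix.diagonal μ' := by
    ext i j
    rw [Matrix.mul_diagonal, Matrix.mul_apply]
    have := congrFun (h' j) i
    rw [Matrix.mulVec, dotProduct] at this
    simp only [Pi.smul_apply, smul_eq_mul] at this
    simp only [hSe]
    rw [this, mul_comm]
  refine ⟨S, μ', hS, ?_⟩
  rw [← key, Matrix.mul_nonsing_inv_cancel_right _ _ hdet]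


variable {n : ℕ}

-- helper: mulLeft/mulRight nilpotency and additivity
lemma mulLeft_add' (x y : Matrix (Fin n) (Fin n) ℂ) :
    LinearMap.mulLeft ℂ (x + y) = LinearMap.mulLeft ℂ x + LinearMap.mulLeft ℂ y :=
  LinearMap.ext fun X => by simp [Matrix.add_mul]

lemma mulRight_add' (x y : Matrix (Fin n) (Fin n) ℂ) :
    LinearMap.mulRight ℂ (x + y) = LinearMap.mulRight ℂ x + LinearMap.mulRight ℂ y :=
  LinearMap.ext fun X => by simp [Matrix.mul_add]

lemma isNilpotent_mulLeft' {x : Matrix (Fin n) (Fin n) ℂ} (h : IsNilpotent x) :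
    IsNilpotent (LinearMap.mulLeft ℂ x) := by
  obtain ⟨m, hm⟩ := h
  exact ⟨m, by rw [LinearMap.pow_mulLeft, hm]; exact LinearMap.ext fun X => by simp⟩

lemma isNilpotent_mulRight' {x : Matrix (Fin n) (Fin n) ℂ} (h : IsNilpotent x) :
    IsNilpotent (LinearMap.mulRight ℂ x) := by
  obtain ⟨m, hm⟩ := h
  exact ⟨m, by rw [LinearMap.pow_mulRight, hm]; exact LinearMap.ext fun X => by simp⟩

lemma commute_mulLeft' {x y : Matrix (Fin n) (Fin n) ℂ} (h : Commute x y) :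
    Commute (LinearMap.mulLeft ℂ x) (LinearMap.mulLeft ℂ y) := by
  unfold Commute SemiconjBy
  rw [Module.End.mul_eq_comp, Module.End.mul_eq_comp, ← LinearMap.mulLeft_mul,
    ← LinearMap.mulLeft_mul, h.eq]

lemma commute_mulRight' {x y : Matrix (Fin n) (Fin n) ℂ} (h : Commute x y) :
    Commute (LinearMap.mulRight ℂ x) (LinearMap.mulRight ℂ y) := by
  unfold Commute SemiconjBy
  rw [Module.End.mul_eq_comp, Module.End.mul_eq_comp, ← LinearMap.mulRight_mul,
    ← LinearMap.mulRight_mul, h.eq]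

lemma commute_inv_left' {P Q : Matrix (Fin n) (Fin n) ℂ} (hP : IsUnit P.det)
    (h : Commute P Q) : Commute P⁻¹ Q := by
  unfold Commute SemiconjBy
  have h2 : P⁻¹ * (Q * (P * P⁻¹)) = P⁻¹ * (P * (Q * P⁻¹)) := by
    rw [← Matrix.mul_assoc Q P P⁻¹, ← Matrix.mul_assoc P Q P⁻¹, h.eq]
  rwa [Matrix.mul_nonsing_inv _ hP, Matrix.mul_one,
    Matrix.nonsing_inv_mul_cancel_left _ _ hP] at h2

lemma forwardDir {n : ℕ} (hn : 1 ≤ n) (A : Matrix (Fin n) (Fin n) ℂ) (hA : IsUnit A)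
    {ι : Type} (b : Basis ι ℂ (Matrix (Fin n) (Fin n) ℂ)) (μ : ι → ℂ)
    (hb : ∀ i, A⁻¹ * b i * A = μ i • b i) :
    ∃ (S : Matrix (Fin n) (Fin n) ℂ) (D : Fin n → ℂ),
      IsUnit S ∧ A = S * Matrix.diagonal D * S⁻¹ := by
  have : NeZero n := ⟨by omega⟩
  have hAdet := (Matrix.isUnit_iff_isUnit_det _).mp hA
  -- the inner automorphism as an endomorphism
  set f : Module.End ℂ (Matrix (Fin n) (Fin n) ℂ) :=
    LinearMap.mulLeft ℂ A⁻¹ * LinearMap.mulRight ℂ A with hf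
  have hfapp : ∀ X, f X = A⁻¹ * X * A := fun X => by
    rw [hf, Module.End.mul_apply, LinearMap.mulRight_apply, LinearMap.mulLeft_apply,
      Matrix.mul_assoc]
  have hfss : f.IsSemisimple :=
    semisimple_of_eigenbasis b μ f (fun i => by rw [hfapp, hb i])
  -- Jordan-Chevalley decomposition of A (via its endomorphism)
  set E := Matrix.toLinAlgEquiv' (n := Fin n) (R := ℂ) with hE
  set g : Module.End ℂ (Fin n → ℂ) := E A with hg
  have hgu : IsUnit g := hA.map E
  obtain ⟨ν, hν, s, hs, hνnil, hss, hgsum⟩ :=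
    Module.End.exists_isNilpotent_isSemisimple (f := g)
  rw [Algebra.adjoin_singleton_eq_range_aeval] at hν hs
  obtain ⟨P, hP⟩ := hν
  obtain ⟨Q, hQ⟩ := hs
  have hcomm_gs : Commute g s := by
    rw [← hQ]
    have h := (Commute.all (Polynomial.X : Polynomial ℂ) Q).map (Polynomial.aeval g)
    simpa using h
  have hcomm_sν : Commute s ν := by
    rw [← hP, ← hQ]
    exact (Commute.all Q P).map (Polynomial.aeval g)
  -- s is invertible
  obtain ⟨k, hk⟩ := id hνnil
  have key : ∀ m : ℕ, ∀ x, s x = 0 → (g ^ m) x = (ν ^ m) x := by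
    intro m
    induction m with
    | zero => intro x _; simp
    | succ m ih =>
      intro x hx
      have hgx : g x = ν x := by
        rw [hgsum, LinearMap.add_apply, hx, add_zero]
      have hsνx : s (ν x) = 0 := by
        have h := LinearMap.congr_fun hcomm_sν.eq x
        rw [Module.End.mul_apply, Module.End.mul_apply] at h
        rw [h, hx, map_zero]
      calc (g ^ (m + 1)) x = (g ^ m) (g x) := by rw [pow_succ, Module.End.mul_apply]
        _ = (g ^ m) (ν x) := by rw [hgx]
        _ = (ν ^ m) (ν x) := ih _ hsνx
        _ = (ν ^ (m + 1)) x := by rw [pow_succ, Module.End.mul_apply]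
  have hsu : IsUnit s := by
    have hsinj : Function.Injective s := by
      rw [← LinearMap.ker_eq_bot, Submodule.eq_bot_iff]
      intro x hx
      have h0 : (g ^ k) x = 0 := by
        rw [key k x hx, hk, LinearMap.zero_apply]
      have hinj : Function.Injective (g ^ k) :=
        ((Module.End.isUnit_iff _).mp (hgu.pow k)).injective
      exact hinj (by rw [h0, map_zero])
    exact (Module.End.isUnit_iff s).mpr
      ⟨hsinj, LinearMap.injective_iff_surjective.mp hsinj⟩
  -- back to matrices
  set N : Matrix (Fin n) (Fin n) ℂ := E.symm ν with hN
  set Dm : Matrix (Fin n) (Fin n) ℂ := E.symm s with hDm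
  have hA_eq : A = N + Dm := by
    have h := congrArg E.symm hgsum
    rwa [map_add, AlgEquiv.symm_apply_apply, ← hN, ← hDm] at h
  have hNnil : IsNilpotent N := hνnil.map E.symm
  have hDu : IsUnit Dm := hsu.map E.symm
  have hDdet := (Matrix.isUnit_iff_isUnit_det _).mp hDu
  have hcomm_ND : Commute N Dm := (hcomm_sν.symm).map E.symm
  have hcomm_AD : Commute A Dm := by
    have h := hcomm_gs.map E.symm
    rwa [AlgEquiv.symm_apply_apply, ← hDm] at h
  have hcomm_AN : Commute A N := by
    rw [hA_eq]
    exact Commute.add_left (Commute.refl N) hcomm_ND.symm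
  -- diagonalize Dm
  obtain ⟨ι', v, μ', hv⟩ := eigenbasis_of_semisimple s hss
  have hveq : ∀ i, Dm.mulVec (v i) = μ' i • v i := by
    intro i
    have hEs : E Dm = s := by rw [hDm, AlgEquiv.apply_symm_apply]
    have h2 := hv i
    rw [← hEs, hE, Matrix.toLinAlgEquiv'_apply] at h2
    exact h2
  obtain ⟨S, dvec, hSu, hDdiag⟩ := diagonalizable_of_eigenbasis Dm v μ' hveq
  -- commutation facts for inverses
  have hcomm_AinvD : Commute A⁻¹ Dm := commute_inv_left' hAdet hcomm_AD
  have hcomm_AinvDinv : Commute A⁻¹ Dm⁻¹ :=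
    (commute_inv_left' hDdet hcomm_AinvD.symm).symm
  have hcomm_AinvN : Commute A⁻¹ N := commute_inv_left' hAdet hcomm_AN
  have hcomm_DinvN : Commute Dm⁻¹ N := commute_inv_left' hDdet hcomm_ND.symm
  -- the difference of inverses is nilpotent
  set n₁ : Matrix (Fin n) (Fin n) ℂ := A⁻¹ - Dm⁻¹ with hn₁def
  have hn₁ : n₁ = -(A⁻¹ * (N * Dm⁻¹)) := by
    have expand : A⁻¹ * ((Dm - A) * Dm⁻¹) = A⁻¹ - Dm⁻¹ := by
      rw [Matrix.sub_mul, Matrix.mul_sub, Matrix.mul_nonsing_inv _ hDdet, Matrix.mul_one,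
        Matrix.nonsing_inv_mul_cancel_left _ _ hAdet]
    have hDA : Dm - A = -N := by rw [hA_eq]; abel
    rw [hn₁def, ← expand, hDA, Matrix.neg_mul, Matrix.mul_neg]
  have hn₁nil : IsNilpotent n₁ := by
    rw [hn₁]
    apply IsNilpotent.neg
    exact (hcomm_AinvN.mul_right hcomm_AinvDinv).isNilpotent_mul_left
      (hcomm_DinvN.symm.isNilpotent_mul_right hNnil)
  have hcomm_Dinv_n₁ : Commute Dm⁻¹ n₁ :=
    (hcomm_AinvDinv.symm).sub_right (Commute.refl Dm⁻¹)
  have hcomm_n₁N : Commute n₁ N := hcomm_AinvN.sub_left hcomm_DinvN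
  have hcomm_n₁D : Commute n₁ Dm := hcomm_AinvD.sub_left (commute_inv_left' hDdet (Commute.refl Dm))
  -- the inner automorphism of Dm
  set sW : Module.End ℂ (Matrix (Fin n) (Fin n) ℂ) :=
    LinearMap.mulLeft ℂ Dm⁻¹ * LinearMap.mulRight ℂ Dm with hsW
  have hLA : LinearMap.mulLeft ℂ A⁻¹ = LinearMap.mulLeft ℂ Dm⁻¹ + LinearMap.mulLeft ℂ n₁ := by
    rw [← mulLeft_add']
    congr 1
    rw [hn₁def]; abel
  have hRA : LinearMap.mulRight ℂ A = LinearMap.mulRight ℂ Dm + LinearMap.mulRight ℂ N := by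
    rw [← mulRight_add']
    congr 1
    rw [hA_eq]; abel
  have hdecomp : f - sW = LinearMap.mulLeft ℂ Dm⁻¹ * LinearMap.mulRight ℂ N
      + LinearMap.mulLeft ℂ n₁ * LinearMap.mulRight ℂ Dm
      + LinearMap.mulLeft ℂ n₁ * LinearMap.mulRight ℂ N := by
    rw [hf, hsW, hLA, hRA]
    noncomm_ring
  have hcomm_LR : ∀ x y : Matrix (Fin n) (Fin n) ℂ,
      Commute (LinearMap.mulLeft ℂ x) (LinearMap.mulRight ℂ y) := fun x y =>
    LinearMap.commute_mulLeft_right x y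
  have prodcomm : ∀ x y x' y' : Matrix (Fin n) (Fin n) ℂ, Commute x x' → Commute y y' →
      Commute (LinearMap.mulLeft ℂ x * LinearMap.mulRight ℂ y)
        (LinearMap.mulLeft ℂ x' * LinearMap.mulRight ℂ y') := by
    intro x y x' y' h1 h2
    exact Commute.mul_left ((commute_mulLeft' h1).mul_right (hcomm_LR x y'))
      (((hcomm_LR x' y).symm).mul_right (commute_mulRight' h2))
  have ht1 : IsNilpotent (LinearMap.mulLeft ℂ Dm⁻¹ * LinearMap.mulRight ℂ N) :=
    (hcomm_LR _ _).isNilpotent_mul_left (isNilpotent_mulRight' hNnil)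
  have ht2 : IsNilpotent (LinearMap.mulLeft ℂ n₁ * LinearMap.mulRight ℂ Dm) :=
    (hcomm_LR _ _).isNilpotent_mul_right (isNilpotent_mulLeft' hn₁nil)
  have ht3 : IsNilpotent (LinearMap.mulLeft ℂ n₁ * LinearMap.mulRight ℂ N) :=
    (hcomm_LR _ _).isNilpotent_mul_right (isNilpotent_mulLeft' hn₁nil)
  have c12 := prodcomm Dm⁻¹ N n₁ Dm hcomm_Dinv_n₁ hcomm_ND
  have c13 := prodcomm Dm⁻¹ N n₁ N hcomm_Dinv_n₁ (Commute.refl N)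
  have c23 := prodcomm n₁ Dm n₁ N (Commute.refl n₁) hcomm_ND.symm
  have hnil_fs : IsNilpotent (f - sW) := by
    rw [hdecomp]
    exact (c13.add_left c23).isNilpotent_add (c12.isNilpotent_add ht1 ht2) ht3
  have hcomm_f_sW : Commute f sW := by
    rw [hf, hsW]
    exact prodcomm A⁻¹ A Dm⁻¹ Dm hcomm_AinvDinv hcomm_AD
  -- sW is semisimple since Dm is diagonalizable
  obtain ⟨ι2, b2, μ2, hb2⟩ := easyDir Dm S dvec hDu hSu hDdiag
  have hsWss : sW.IsSemisimple := semisimple_of_eigenbasis b2 μ2 sW (fun i => by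
    rw [hsW, Module.End.mul_apply, LinearMap.mulRight_apply, LinearMap.mulLeft_apply,
      ← Matrix.mul_assoc, hb2 i])
  have hsub_ss : (f - sW).IsSemisimple :=
    Module.End.IsSemisimple.sub_of_commute hcomm_f_sW hfss hsWss
  have hfsW : f = sW :=
    sub_eq_zero.mp (Module.End.eq_zero_of_isNilpotent_isSemisimple hnil_fs hsub_ss)
  -- hence Dm * A⁻¹ is central, so a scalar
  have hXall : ∀ X, A⁻¹ * (X * A) = Dm⁻¹ * (X * Dm) := fun X => by
    have h := LinearMap.congr_fun hfsW X
    rw [hf, hsW, Module.End.mul_apply, Module.End.mul_apply, LinearMap.mulRight_apply,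
      LinearMap.mulRight_apply, LinearMap.mulLeft_apply, LinearMap.mulLeft_apply] at h
    exact h
  have h2 : ∀ X, Dm * (A⁻¹ * (X * A)) = X * Dm := fun X => by
    rw [hXall X, Matrix.mul_nonsing_inv_cancel_left _ _ hDdet]
  have h3 : ∀ X : Matrix (Fin n) (Fin n) ℂ, Dm * A⁻¹ * X = X * (Dm * A⁻¹) := fun X => by
    have h4 := congrArg (fun Y => Y * A⁻¹) (h2 X)
    simp only [← Matrix.mul_assoc] at h4 ⊢
    rwa [Matrix.mul_nonsing_inv_cancel_right _ _ hAdet] at h4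
  have hcent : Dm * A⁻¹ ∈ Set.range (Matrix.scalar (Fin n)) :=
    Matrix.mem_range_scalar_of_commute_single (fun i j _ => (h3 _).symm)
  obtain ⟨c, hc⟩ := hcent
  have hDmA : Dm = c • A := by
    have h5 := congrArg (fun Y => Y * A) hc
    rw [Matrix.nonsing_inv_mul_cancel_right _ _ hAdet] at h5
    rw [← h5]
    simp [Matrix.scalar_apply, Matrix.smul_eq_diagonal_mul]
  have hc0 : c ≠ 0 := by
    rintro rfl
    rw [zero_smul] at hDmA
    have : Nonempty (Fin n) := ⟨⟨0, by omega⟩⟩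
    rw [hDmA, Matrix.det_zero] at hDdet
    exact hDdet.ne_zero rfl
  refine ⟨S, c⁻¹ • dvec, hSu, ?_⟩
  have hAc : A = c⁻¹ • Dm := by
    rw [hDmA, smul_smul, inv_mul_cancel₀ hc0, one_smul]
  rw [hAc, hDdiag, Matrix.diagonal_smul, Matrix.mul_smul, Matrix.smul_mul]

/-- For an invertible n×n complex matrix A, the inner automorphism
    Ad_A : X ↦ A⁻¹ X A of M_n(ℂ) admits a basis of eigenvectors if and only if
    A is diagonalizable. -/
theorem stmt7 (n : ℕ) (hn : 1 ≤ n) (A : Matrix (Fin n) (Fin n) ℂ) (hA : IsUnit A) :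
    (∃ (ι : Type) (b : Basis ι ℂ (Matrix (Fin n) (Fin n) ℂ)) (μ : ι → ℂ),
        ∀ i, A⁻¹ * b i * A = μ i • b i) ↔
      ∃ (S : Matrix (Fin n) (Fin n) ℂ) (D : Fin n → ℂ),
        IsUnit S ∧ A = S * Matrix.diagonal D * S⁻¹ := by
  constructor
  · rintro ⟨ι, b, μ, hb⟩
    exact forwardDir hn A hA b μ hb
  · rintro ⟨S, D, hS, hAe⟩
    exact easyDir A S D hA hS hAe
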